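/- Every eigenvalue of a complementary matrix A has nonnegative real part, the sum of the eigenvalues of A equals 1/2, and there is a positive real eigenvalue ρ of A such that the absolute value of every eigenvalue of A is at most ρ. -/

import Mathlib

set_option linter.unusedSectionVars false
set_option maxHeartbeats 1000000

open Matrix Finset

section Helpers

variable {α : Type} [Fintype α] [DecidableEq α]

theorem mem_spectrum_iff_eigvec (K : Type) [Field K] (N : Matrix α α K) (μ : K) :
    μ ∈ spectrum K N ↔ ∃ v : α → K, v ≠ 0 ∧ N.mulVec v = μ • v := by
  rw [spectrum.mem_iff, Matrix.isUnit_iff_isUnit_det, isUnit_iff_ne_zero, not_not,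
    ← Matrix.exists_mulVec_eq_zero_iff]
  have key : ∀ v : α → K, (algebraMap K (Matrix α α K) μ - N).mulVec v = μ • v - N.mulVec v := by
    intro v
    simp [Matrix.sub_mulVec, Matrix.algebraMap_eq_diagonal, Matrix.mulVec_diagonal]
    funext i
    simp [Matrix.mulVec_diagonal]
  constructor
  · rintro ⟨v, hv, h⟩
    exact ⟨v, hv, (sub_eq_zero.mp ((key v) ▸ h)).symm⟩
  · rintro ⟨v, hv, h⟩
    exact ⟨v, hv, by rw [key v, h, sub_self]⟩

theorem mem_spectrum_iff_det (K : Type) [Field K] (N : Matrix α α K) (μ : K) :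
    μ ∈ spectrum K N ↔ (μ • (1 : Matrix α α K) - N).det = 0 := by
  rw [spectrum.mem_iff, Matrix.isUnit_iff_isUnit_det, isUnit_iff_ne_zero, not_not,
    Algebra.algebraMap_eq_smul_one]

/-- Collatz–Wielandt predicate. -/
def Good (M : Matrix α α ℝ) (t : ℝ) : Prop :=
  ∃ u : α → ℝ, (∀ i, 0 ≤ u i) ∧ ∑ i, u i = 1 ∧ ∀ i, t * u i ≤ ∑ j, M i j * u j

theorem good_mono {M M' : Matrix α α ℝ} (h : ∀ i j, M i j ≤ M' i j) {t : ℝ} :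
    Good M t → Good M' t := by
  rintro ⟨u, h0, h1, hle⟩
  exact ⟨u, h0, h1, fun i => (hle i).trans (Finset.sum_le_sum fun j _ =>
    mul_le_mul_of_nonneg_right (h i j) (h0 j))⟩

theorem simplex_le_one {u : α → ℝ} (h0 : ∀ i, 0 ≤ u i) (h1 : ∑ i, u i = 1) (i : α) : u i ≤ 1 := by
  rw [← h1]; exact Finset.single_le_sum (fun j _ => h0 j) (Finset.mem_univ i)

theorem good_le_T {M : Matrix α α ℝ} (hM : ∀ i j, 0 ≤ M i j) {t : ℝ} (h : Good M t) :
    t ≤ ∑ i, ∑ j, M i j := by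
  obtain ⟨u, h0, h1, hle⟩ := h
  calc t = ∑ i, t * u i := by rw [← Finset.mul_sum, h1, mul_one]
    _ ≤ ∑ i, ∑ j, M i j * u j := Finset.sum_le_sum fun i _ => hle i
    _ ≤ ∑ i, ∑ j, M i j := Finset.sum_le_sum fun i _ => Finset.sum_le_sum fun j _ =>
        mul_le_of_le_one_right (hM i j) (simplex_le_one h0 h1 j)

theorem good_zero [Nonempty α] {M : Matrix α α ℝ} (hM : ∀ i j, 0 ≤ M i j) : Good M 0 := by
  have hc : (0:ℝ) < (Fintype.card α : ℝ) := by
    exact_mod_cast Fintype.card_pos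
  refine ⟨fun _ => (Fintype.card α : ℝ)⁻¹, fun i => inv_nonneg.mpr (Nat.cast_nonneg _), ?_, fun i => ?_⟩
  · rw [Finset.sum_const, Finset.card_univ, nsmul_eq_mul, mul_inv_cancel₀ hc.ne']
  · rw [zero_mul]
    exact Finset.sum_nonneg fun j _ => mul_nonneg (hM i j) (inv_nonneg.mpr (Nat.cast_nonneg _))

theorem good_diag [Nonempty α] {M : Matrix α α ℝ} (hM : ∀ i j, 0 ≤ M i j) (i : α) :
    Good M (M i i) := by
  refine ⟨fun j => if j = i then 1 else 0, fun j => by dsimp only; split <;> norm_num, by simp, fun j => ?_⟩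
  simp only [mul_ite, mul_one, mul_zero]
  rw [Finset.sum_ite_eq' Finset.univ i (fun k => M j k), if_pos (Finset.mem_univ i)]
  by_cases hji : j = i
  · subst hji; simp
  · simp [hji, hM j i]

theorem exists_max_good [Nonempty α] (M : Matrix α α ℝ) (hM : ∀ i j, 0 ≤ M i j) :
    ∃ t0, 0 ≤ t0 ∧ Good M t0 ∧ ∀ t, Good M t → t ≤ t0 := by
  let T : ℝ := ∑ i, ∑ j, M i j
  let K : Set (ℝ × (α → ℝ)) := {p | (0 ≤ p.1 ∧ p.1 ≤ T) ∧ (∀ i, 0 ≤ p.2 i ∧ p.2 i ≤ 1) ∧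
    (∑ i, p.2 i = 1) ∧ ∀ i, p.1 * p.2 i ≤ ∑ j, M i j * p.2 j}
  have hclosed : IsClosed K := by
    simp only [K, Set.setOf_and, Set.setOf_forall]
    refine (IsClosed.inter (IsClosed.inter ?_ ?_) (IsClosed.inter
      (isClosed_iInter fun i => IsClosed.inter ?_ ?_)
      (IsClosed.inter ?_ (isClosed_iInter fun i => ?_))))
    · exact isClosed_le continuous_const continuous_fst
    · exact isClosed_le continuous_fst continuous_const
    · exact isClosed_le continuous_const ((continuous_apply i).comp continuous_snd)
    · exact isClosed_le ((continuous_apply i).comp continuous_snd) continuous_const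
    · exact isClosed_eq (continuous_finset_sum _ fun i _ =>
        (continuous_apply i).comp continuous_snd) continuous_const
    · exact isClosed_le (continuous_fst.mul ((continuous_apply i).comp continuous_snd))
        (continuous_finset_sum _ fun j _ =>
          continuous_const.mul ((continuous_apply j).comp continuous_snd))
  have hsub : K ⊆ (Set.Icc (0:ℝ) T) ×ˢ (Set.pi Set.univ fun _ : α => Set.Icc (0:ℝ) 1) := by
    rintro ⟨t, u⟩ ⟨⟨h1, h2⟩, h3, _, _⟩
    exact ⟨⟨h1, h2⟩, fun i _ => h3 i⟩
  have hKc : IsCompact K := IsCompact.of_isClosed_subset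
    ((isCompact_Icc).prod (isCompact_univ_pi fun _ => isCompact_Icc)) hclosed hsub
  have hne : K.Nonempty := by
    obtain ⟨u, h0, h1, hle⟩ := good_zero hM
    refine ⟨(0, u), ⟨le_refl 0, good_le_T hM (good_zero hM)⟩,
      fun i => ⟨h0 i, simplex_le_one h0 h1 i⟩, h1, fun i => by simpa using hle i⟩
  obtain ⟨p, hpK, hmax⟩ := hKc.exists_isMaxOn hne continuous_fst.continuousOn
  obtain ⟨⟨hp1, hp2⟩, hp3, hp4, hp5⟩ := hpK
  refine ⟨p.1, hp1, ⟨p.2, fun i => (hp3 i).1, hp4, hp5⟩, fun t ht => ?_⟩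
  rcases le_or_gt t 0 with h | h
  · exact h.trans hp1
  · have hT' := good_le_T hM ht
    obtain ⟨u, h0, h1, hle⟩ := ht
    exact hmax (show (t, u) ∈ K from ⟨⟨h.le, hT'⟩,
      fun i => ⟨h0 i, simplex_le_one h0 h1 i⟩, h1, hle⟩)

theorem perron_pos [Nonempty α] (M : Matrix α α ℝ) (hM : ∀ i j, 0 < M i j) :
    ∃ ρ : ℝ, 0 ≤ ρ ∧ Good M ρ ∧ (∃ v : α → ℝ, v ≠ 0 ∧ ∀ i, ∑ j, M i j * v j = ρ * v i) ∧
      ∀ t, Good M t → t ≤ ρ := by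
  obtain ⟨t0, ht0, hg, hmax⟩ := exists_max_good M fun i j => (hM i j).le
  obtain ⟨u, h0, h1, hle⟩ := hg
  refine ⟨t0, ht0, ⟨u, h0, h1, hle⟩, ?_, hmax⟩
  have hune : u ≠ 0 := by
    intro h
    rw [h] at h1
    simp at h1
  by_cases hw : ∀ i, ∑ j, M i j * u j = t0 * u i
  · exact ⟨u, hune, hw⟩
  exfalso
  push_neg at hw
  obtain ⟨k0, hk0⟩ : ∃ k, 0 < u k := by
    by_contra h
    push_neg at h
    have : ∀ k, u k = 0 := fun k => le_antisymm (h k) (h0 k)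
    exact hune (funext this)
  -- y = M u is strictly positive
  set y : α → ℝ := fun i => ∑ j, M i j * u j with hy_def
  have hy : ∀ i, 0 < y i := by
    intro i
    have : M i k0 * u k0 ≤ y i :=
      Finset.single_le_sum (fun j _ => mul_nonneg (hM i j).le (h0 j)) (Finset.mem_univ k0)
    nlinarith [hM i k0]
  set w : α → ℝ := fun i => y i - t0 * u i with hw_def
  have hw0 : ∀ i, 0 ≤ w i := fun i => sub_nonneg.2 (hle i)
  obtain ⟨k1, hk1⟩ : ∃ k, 0 < w k := by
    by_contra hcon
    push_neg at hcon
    obtain ⟨i, hi⟩ := hw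
    exact hi (sub_eq_zero.mp (le_antisymm (hcon i) (hw0 i) : w i = 0))
  set z : α → ℝ := fun i => ∑ j, M i j * w j with hz_def
  have hz : ∀ i, 0 < z i := by
    intro i
    have : M i k1 * w k1 ≤ z i :=
      Finset.single_le_sum (fun j _ => mul_nonneg (hM i j).le (hw0 j)) (Finset.mem_univ k1)
    nlinarith [hM i k1]
  have hMy : ∀ i, ∑ j, M i j * y j = t0 * y i + z i := by
    intro i
    have : ∀ j, y j = t0 * u j + w j := fun j => by simp only [hw_def]; ring
    calc ∑ j, M i j * y j = ∑ j, (t0 * (M i j * u j) + M i j * w j) := by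
          apply Finset.sum_congr rfl
          intro j _
          rw [this j]
          ring
      _ = t0 * ∑ j, M i j * u j + ∑ j, M i j * w j := by
          rw [Finset.sum_add_distrib, Finset.mul_sum]
      _ = t0 * y i + z i := rfl
  set c : ℝ := ∑ i, y i with hc_def
  have hc : 0 < c := Finset.sum_pos (fun i _ => hy i) Finset.univ_nonempty
  have hαne : (Finset.univ : Finset α).Nonempty := Finset.univ_nonempty
  set δ : ℝ := Finset.univ.inf' hαne (fun i => z i / y i) with hδ_def
  have hδ : 0 < δ := by
    rw [hδ_def, Finset.lt_inf'_iff]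
    exact fun i _ => div_pos (hz i) (hy i)
  have hδle : ∀ i, δ * y i ≤ z i := by
    intro i
    have h1 : δ ≤ z i / y i := Finset.inf'_le _ (Finset.mem_univ i)
    rw [div_eq_inv_mul] at h1
    calc δ * y i ≤ ((y i)⁻¹ * z i) * y i :=
          mul_le_mul_of_nonneg_right h1 (hy i).le
      _ = ((y i)⁻¹ * y i) * z i := by ring
      _ = z i := by rw [inv_mul_cancel₀ (hy i).ne', one_mul]
  have hgood : Good M (t0 + δ) := by
    refine ⟨fun i => c⁻¹ * y i, fun i => mul_nonneg (inv_nonneg.mpr hc.le) (hy i).le, ?_, ?_⟩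
    · rw [← Finset.mul_sum, ← hc_def, inv_mul_cancel₀ hc.ne']
    · intro i
      have hineq : (t0 + δ) * y i ≤ ∑ j, M i j * y j := by
        rw [hMy i]
        nlinarith [hδle i]
      calc (t0 + δ) * (c⁻¹ * y i) = c⁻¹ * ((t0 + δ) * y i) := by ring
        _ ≤ c⁻¹ * ∑ j, M i j * y j :=
            mul_le_mul_of_nonneg_left hineq (inv_nonneg.mpr hc.le)
        _ = ∑ j, M i j * (c⁻¹ * y j) := by
            rw [Finset.mul_sum]
            exact Finset.sum_congr rfl fun j _ => by ring
  linarith [hmax _ hgood]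

theorem det_eig_iff (N : Matrix α α ℝ) (ρ : ℝ) :
    (ρ • (1 : Matrix α α ℝ) - N).det = 0 ↔
      ∃ v : α → ℝ, v ≠ 0 ∧ ∀ i, ∑ j, N i j * v j = ρ * v i := by
  rw [← Matrix.exists_mulVec_eq_zero_iff]
  have key : ∀ v : α → ℝ, ∀ i, (ρ • (1 : Matrix α α ℝ) - N).mulVec v i
      = ρ * v i - ∑ j, N i j * v j := by
    intro v i
    rw [Matrix.sub_mulVec, Matrix.smul_mulVec, Matrix.one_mulVec]
    simp [Matrix.mulVec, dotProduct]
  constructor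
  · rintro ⟨v, hv, h⟩
    refine ⟨v, hv, fun i => ?_⟩
    have := congrFun h i
    rw [key v i] at this
    have := sub_eq_zero.mp this
    linarith
  · rintro ⟨v, hv, h⟩
    refine ⟨v, hv, funext fun i => ?_⟩
    rw [key v i, h i, sub_self]
    rfl

theorem good_abs [Nonempty α] {M : Matrix α α ℝ} (hM : ∀ i j, 0 ≤ M i j) {μ : ℂ}
    (hμ : μ ∈ spectrum ℂ (M.map Complex.ofReal)) : Good M ‖μ‖ := by
  obtain ⟨v, hv, hEig⟩ := (mem_spectrum_iff_eigvec ℂ _ μ).mp hμ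
  have hEig' : ∀ i, ∑ j, (M i j : ℂ) * v j = μ * v i := by
    intro i
    have := congrFun hEig i
    simpa [Matrix.mulVec, dotProduct, Matrix.map_apply] using this
  set a : α → ℝ := fun i => ‖v i‖ with ha
  have ha0 : ∀ i, 0 ≤ a i := fun i => norm_nonneg _
  have hkey : ∀ i, ‖μ‖ * a i ≤ ∑ j, M i j * a j := by
    intro i
    calc ‖μ‖ * a i = ‖μ * v i‖ := (norm_mul μ (v i)).symm
      _ = ‖∑ j, (M i j : ℂ) * v j‖ := by rw [hEig' i]
      _ ≤ ∑ j, ‖(M i j : ℂ) * v j‖ := norm_sum_le _ _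
      _ = ∑ j, M i j * a j := Finset.sum_congr rfl fun j _ => by
            rw [norm_mul, Complex.norm_of_nonneg (hM i j)]
  obtain ⟨i0, hi0⟩ : ∃ i, v i ≠ 0 := Function.ne_iff.mp hv
  have hs : 0 < ∑ i, a i := Finset.sum_pos' (fun i _ => ha0 i)
    ⟨i0, Finset.mem_univ i0, norm_pos_iff.mpr hi0⟩
  refine ⟨fun i => (∑ i, a i)⁻¹ * a i,
    fun i => mul_nonneg (inv_nonneg.mpr hs.le) (ha0 i), ?_, ?_⟩
  · rw [← Finset.mul_sum, inv_mul_cancel₀ hs.ne']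
  · intro i
    calc ‖μ‖ * ((∑ i, a i)⁻¹ * a i) = (∑ i, a i)⁻¹ * (‖μ‖ * a i) := by ring
      _ ≤ (∑ i, a i)⁻¹ * ∑ j, M i j * a j :=
          mul_le_mul_of_nonneg_left (hkey i) (inv_nonneg.mpr hs.le)
      _ = ∑ j, M i j * ((∑ i, a i)⁻¹ * a j) := by
          rw [Finset.mul_sum]
          exact Finset.sum_congr rfl fun j _ => by ring

theorem perron [Nonempty α] (M : Matrix α α ℝ) (hM : ∀ i j, 0 ≤ M i j) :
    ∃ ρ : ℝ, 0 ≤ ρ ∧ ((ρ • (1 : Matrix α α ℝ) - M).det = 0) ∧ ∀ t, Good M t → t ≤ ρ := by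
  set E : Matrix α α ℝ := Matrix.of fun _ _ => (1:ℝ) with hE
  set Mk : ℕ → Matrix α α ℝ := fun k => M + ((k:ℝ)+1)⁻¹ • E with hMk
  have hMkpos : ∀ k i j, 0 < Mk k i j := by
    intro k i j
    have : (0:ℝ) < ((k:ℝ)+1)⁻¹ := by positivity
    simp only [hMk, Matrix.add_apply, Matrix.smul_apply, hE, Matrix.of_apply, smul_eq_mul,
      mul_one]
    linarith [hM i j]
  have hMle : ∀ k i j, M i j ≤ Mk k i j := by
    intro k i j
    have : (0:ℝ) ≤ ((k:ℝ)+1)⁻¹ := by positivity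
    simp only [hMk, Matrix.add_apply, Matrix.smul_apply, hE, Matrix.of_apply, smul_eq_mul,
      mul_one]
    linarith
  have hMkanti : ∀ k i j, Mk (k+1) i j ≤ Mk k i j := by
    intro k i j
    have h1 : ((k:ℝ)+1+1)⁻¹ ≤ ((k:ℝ)+1)⁻¹ := by
      apply inv_anti₀ (by positivity)
      push_cast
      linarith
    simp only [hMk, Matrix.add_apply, Matrix.smul_apply, hE, Matrix.of_apply, smul_eq_mul,
      mul_one]
    push_cast
    linarith
  choose ρ hρ0 hρgood hρvec hρmax using fun k => perron_pos (Mk k) (hMkpos k)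
  have hanti : Antitone ρ := antitone_nat_of_succ_le fun k =>
    hρmax k _ (good_mono (hMkanti k) (hρgood (k+1)))
  have hbdd : BddBelow (Set.range ρ) := ⟨0, by rintro x ⟨k, rfl⟩; exact hρ0 k⟩
  set L := ⨅ k, ρ k with hL
  have hLlim : Filter.Tendsto ρ Filter.atTop (nhds L) := tendsto_atTop_ciInf hanti hbdd
  have hL0 : 0 ≤ L := le_ciInf fun k => hρ0 k
  have hdetk : ∀ k, ((ρ k) • (1 : Matrix α α ℝ) - Mk k).det = 0 := by
    intro k
    obtain ⟨v, hv, hvec⟩ := hρvec k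
    exact (det_eig_iff (Mk k) (ρ k)).mpr ⟨v, hv, hvec⟩
  have hcont : Continuous fun p : ℝ × ℝ =>
      (p.1 • (1 : Matrix α α ℝ) - (M + p.2 • E)).det := by
    apply Continuous.matrix_det
    apply continuous_matrix
    intro i j
    simp only [Matrix.sub_apply, Matrix.smul_apply, Matrix.add_apply, hE, Matrix.of_apply,
      smul_eq_mul, mul_one]
    exact (continuous_fst.mul continuous_const).sub
      (continuous_const.add continuous_snd)
  have hεlim : Filter.Tendsto (fun k : ℕ => ((k:ℝ)+1)⁻¹) Filter.atTop (nhds 0) := by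
    have := tendsto_one_div_add_atTop_nhds_zero_nat (𝕜 := ℝ)
    simpa [one_div] using this
  have hprod : Filter.Tendsto (fun k : ℕ => (ρ k, ((k:ℝ)+1)⁻¹)) Filter.atTop
      (nhds (L, 0)) := hLlim.prodMk_nhds hεlim
  have h4 := (hcont.tendsto (L, 0)).comp hprod
  have h5 : (fun k : ℕ => (((ρ k) • (1 : Matrix α α ℝ) - (M + ((k:ℝ)+1)⁻¹ • E)).det))
      = fun _ => (0:ℝ) := funext fun k => hdetk k
  rw [show (fun p : ℝ × ℝ => (p.1 • (1 : Matrix α α ℝ) - (M + p.2 • E)).det) ∘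
      (fun k : ℕ => (ρ k, ((k:ℝ)+1)⁻¹)) = fun k : ℕ =>
      (((ρ k) • (1 : Matrix α α ℝ) - (M + ((k:ℝ)+1)⁻¹ • E)).det) from rfl, h5] at h4
  have hdetL : (L • (1 : Matrix α α ℝ) - (M + (0:ℝ) • E)).det = 0 :=
    (tendsto_nhds_unique tendsto_const_nhds h4).symm
  rw [zero_smul, add_zero] at hdetL
  refine ⟨L, hL0, hdetL, fun t ht => le_ciInf fun k => hρmax k t (good_mono (hMle k) ht)⟩

theorem perron_main [Nonempty α] (M : Matrix α α ℝ) (hM : ∀ i j, 0 ≤ M i j) :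
    ∃ ρ : ℝ, (∀ i, M i i ≤ ρ) ∧ (ρ : ℂ) ∈ spectrum ℂ (M.map Complex.ofReal) ∧
      ∀ μ ∈ spectrum ℂ (M.map Complex.ofReal), ‖μ‖ ≤ ρ := by
  obtain ⟨ρ, hρ0, hdet, hmax⟩ := perron M hM
  obtain ⟨v, hv, hvec⟩ := (det_eig_iff M ρ).mp hdet
  refine ⟨ρ, fun i => hmax _ (good_diag hM i), ?_, fun μ hμ => hmax _ (good_abs hM hμ)⟩
  rw [mem_spectrum_iff_eigvec]
  refine ⟨fun i => (v i : ℂ), ?_, ?_⟩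
  · obtain ⟨i0, hi0⟩ := Function.ne_iff.mp hv
    refine Function.ne_iff.mpr ⟨i0, ?_⟩
    simpa using hi0
  · funext i
    have h := hvec i
    simp only [Matrix.mulVec, dotProduct, Matrix.map_apply, Pi.smul_apply, smul_eq_mul]
    have : ((∑ j, M i j * v j : ℝ) : ℂ) = ((ρ * v i : ℝ) : ℂ) := congrArg Complex.ofReal h
    push_cast at this
    convert this using 2

end Helpers

theorem stmt_12 (n : ℕ) (hn : 0 < n) (A : Matrix (Fin n) (Fin n) ℝ)
    (hnonneg : ∀ i j, 0 ≤ A i j)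
    (hcompl : ∀ i j, A i j + A j i = 1 / n) :
    (∀ μ ∈ spectrum ℂ (A.map Complex.ofReal), 0 ≤ μ.re) ∧
      (Matrix.charpoly (A.map Complex.ofReal)).roots.sum = 1 / 2 ∧
      ∃ ρ : ℝ, 0 < ρ ∧ (ρ : ℂ) ∈ spectrum ℂ (A.map Complex.ofReal) ∧
        ∀ μ ∈ spectrum ℂ (A.map Complex.ofReal), ‖μ‖ ≤ ρ := by
  haveI : Nonempty (Fin n) := ⟨⟨0, hn⟩⟩
  have hnR : (0:ℝ) < n := by exact_mod_cast hn
  have hdiag : ∀ i, A i i = 1 / (2 * n) := by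
    intro i
    have h := hcompl i i
    have h2 : (1:ℝ) / (2 * n) = (1 / n) / 2 := by
      field_simp
    rw [h2]
    linarith
  refine ⟨?_, ?_, ?_⟩
  · -- every eigenvalue has nonnegative real part
    intro μ hμ
    obtain ⟨v, hv, hEig⟩ := (mem_spectrum_iff_eigvec ℂ _ μ).mp hμ
    have hEig' : ∀ i, ∑ j, (A i j : ℂ) * v j = μ * v i := by
      intro i
      have := congrFun hEig i
      simpa [Matrix.mulVec, dotProduct, Matrix.map_apply] using this
    set c : Fin n → Fin n → ℝ := fun i j => ((starRingEnd ℂ) (v i) * v j).re with hc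
    have csym : ∀ i j, c j i = c i j := by
      intro i j
      have h1 : (starRingEnd ℂ) ((starRingEnd ℂ) (v i) * v j) = (starRingEnd ℂ) (v j) * v i := by
        rw [_root_.map_mul, Complex.conj_conj]
        ring
      calc c j i = ((starRingEnd ℂ) (v j) * v i).re := rfl
        _ = ((starRingEnd ℂ) ((starRingEnd ℂ) (v i) * v j)).re := by rw [h1]
        _ = c i j := Complex.conj_re _
    have key : ∀ i, ∑ j, A i j * c i j = μ.re * Complex.normSq (v i) := by
      intro i
      have h2 : ((starRingEnd ℂ) (v i) * ∑ j, (A i j:ℂ) * v j).re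
          = ((starRingEnd ℂ) (v i) * (μ * v i)).re := by rw [hEig' i]
      rw [Finset.mul_sum, Complex.re_sum] at h2
      have hterm : ∀ j, ((starRingEnd ℂ) (v i) * ((A i j:ℂ) * v j)).re = A i j * c i j := by
        intro j
        have e : (starRingEnd ℂ) (v i) * ((A i j:ℂ) * v j)
            = (A i j:ℂ) * ((starRingEnd ℂ) (v i) * v j) := by ring
        rw [e, Complex.mul_re, Complex.ofReal_re, Complex.ofReal_im, zero_mul, sub_zero]
      have hrhs : ((starRingEnd ℂ) (v i) * (μ * v i)).re = μ.re * Complex.normSq (v i) := by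
        have e : (starRingEnd ℂ) (v i) * (μ * v i) = μ * ((starRingEnd ℂ) (v i) * v i) := by ring
        have e2 : (starRingEnd ℂ) (v i) * v i = (Complex.normSq (v i) : ℂ) := by
          rw [mul_comm, Complex.mul_conj]
        rw [e, e2, Complex.mul_re, Complex.ofReal_re, Complex.ofReal_im, mul_zero, sub_zero]
      rw [hrhs] at h2
      rw [← h2]
      exact Finset.sum_congr rfl fun j _ => (hterm j).symm
    set T2 : ℝ := ∑ i, Complex.normSq (v i) with hT2
    have hT2pos : 0 < T2 := by
      obtain ⟨i0, hi0⟩ := Function.ne_iff.mp hv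
      exact Finset.sum_pos' (fun i _ => Complex.normSq_nonneg _)
        ⟨i0, Finset.mem_univ i0, Complex.normSq_pos.mpr hi0⟩
    have hS : ∑ i, ∑ j, A i j * c i j = μ.re * T2 := by
      rw [hT2, Finset.mul_sum]
      exact Finset.sum_congr rfl fun i _ => key i
    have hswap : ∑ i, ∑ j, A j i * c i j = ∑ i, ∑ j, A i j * c i j := by
      rw [Finset.sum_comm]
      exact Finset.sum_congr rfl fun i _ => Finset.sum_congr rfl fun j _ => by rw [csym i j]
    have hdouble : 2 * (μ.re * T2) = ∑ i, ∑ j, (1 / (n:ℝ)) * c i j := by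
      have : ∑ i, ∑ j, (1 / (n:ℝ)) * c i j = ∑ i, ∑ j, (A i j + A j i) * c i j := by
        exact Finset.sum_congr rfl fun i _ => Finset.sum_congr rfl fun j _ => by
          rw [hcompl i j]
      rw [this]
      have : ∑ i, ∑ j, (A i j + A j i) * c i j
          = (∑ i, ∑ j, A i j * c i j) + ∑ i, ∑ j, A j i * c i j := by
        rw [← Finset.sum_add_distrib]
        exact Finset.sum_congr rfl fun i _ => by
          rw [← Finset.sum_add_distrib]
          exact Finset.sum_congr rfl fun j _ => by ring
      rw [this, hswap, hS]
      ring
    have hsum : ∑ i, ∑ j, c i j = Complex.normSq (∑ i, v i) := by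
      have e1 : ∑ i, ∑ j, ((starRingEnd ℂ) (v i) * v j)
          = (starRingEnd ℂ) (∑ i, v i) * (∑ j, v j) := by
        rw [map_sum, Finset.sum_mul_sum]
      have e2 : (starRingEnd ℂ) (∑ i, v i) * (∑ j, v j) = (Complex.normSq (∑ i, v i) : ℂ) := by
        rw [mul_comm, Complex.mul_conj]
      calc ∑ i, ∑ j, c i j = (∑ i, ∑ j, ((starRingEnd ℂ) (v i) * v j)).re := by
            rw [Complex.re_sum]
            exact Finset.sum_congr rfl fun i _ => by rw [Complex.re_sum]
        _ = Complex.normSq (∑ i, v i) := by rw [e1, e2, Complex.ofReal_re]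
    have hfinal : 2 * (μ.re * T2) = (1 / (n:ℝ)) * Complex.normSq (∑ i, v i) := by
      rw [hdouble, ← hsum, Finset.mul_sum]
      exact Finset.sum_congr rfl fun i _ => (Finset.mul_sum _ _ _).symm
    by_contra hneg
    push_neg at hneg
    have hlt : 2 * (μ.re * T2) < 0 := by nlinarith
    rw [hfinal] at hlt
    have hge : 0 ≤ (1/(n:ℝ)) * Complex.normSq (∑ i, v i) :=
      mul_nonneg (by positivity) (Complex.normSq_nonneg _)
    linarith
  · -- sum of roots equals 1/2
    rw [← Matrix.trace_eq_sum_roots_charpoly, Matrix.trace]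
    have : ∀ i : Fin n, (A.map Complex.ofReal).diag i = ((1 / (2 * (n:ℝ)) : ℝ) : ℂ) := by
      intro i
      simp [Matrix.diag, Matrix.map_apply, hdiag i]
    rw [Finset.sum_congr rfl fun i _ => this i, Finset.sum_const, Finset.card_univ,
      Fintype.card_fin, nsmul_eq_mul]
    have hnC : (n:ℂ) ≠ 0 := Nat.cast_ne_zero.mpr hn.ne'
    push_cast
    field_simp
  · -- Perron root
    obtain ⟨ρ, hdiag', hspec, hdom⟩ := perron_main A hnonneg
    refine ⟨ρ, ?_, hspec, hdom⟩
    have h1 := hdiag' ⟨0, hn⟩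
    rw [hdiag ⟨0, hn⟩] at h1
    have : (0:ℝ) < 1 / (2 * n) := by positivity
    linarith
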